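/- Let (B,F) be a display map category with F-dependent coproducts, and let p: E → B be a fibration with fibred products along F. Then p is a dependent Hilbert τ-fibration (i.e., every object of p is (F,∏)-quantifier-free) if and only if for every object α ∈ E_I and every display map f: I ↠ J in F there uniquely exist an arrow τ_{α,f}: J → I in B and a vertical map τ̄_{α,f}: (τ_{α,f})*α → ∏_f α such that: (1) f ∘ τ_{α,f} = id_J; (2) id = τ̄_{α,f} ∘ (τ_{α,f})*(ε_α), where ε: f* ∏_f ⇒ id is the counit of the adjunction f* ⊣ ∏_f; and (3) whenever a vertical arrow u: ∏_g β → α decomposes as u = h ∘ t*(ε_β) for some vertical arrow h and some section t of g, then t = τ_{β,g} and h = u ∘ τ̄_{β,g}. -/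

import Mathlib

open CategoryTheory CategoryTheory.Limits

universe w₂ w₁ v u

namespace Dial

variable {B : Type u} [Category.{v} B]

/-- A display map category structure: a class of maps `F` together with chosen pullbacks of
`F`-maps along arbitrary maps, such that `F` is stable under pullback. -/
structure DisplayStruct (B : Type u) [Category.{v} B] where
  F : MorphismProperty B
  pbObj : ∀ {X Z Y : B} (f : X ⟶ Y) (g : Z ⟶ Y), F f → B
  pbFst : ∀ {X Z Y : B} (f : X ⟶ Y) (g : Z ⟶ Y) (hf : F f), pbObj f g hf ⟶ X
  pbSnd : ∀ {X Z Y : B} (f : X ⟶ Y) (g : Z ⟶ Y) (hf : F f), pbObj f g hf ⟶ Z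
  isPb : ∀ {X Z Y : B} (f : X ⟶ Y) (g : Z ⟶ Y) (hf : F f),
    IsPullback (pbFst f g hf) (pbSnd f g hf) f g
  stable : ∀ {W X Z Y : B} {p₁ : W ⟶ X} {p₂ : W ⟶ Z} {f : X ⟶ Y} {g : Z ⟶ Y},
    IsPullback p₁ p₂ f g → F f → F p₂

/-- `(B, F)` has units: all isomorphisms are display maps. -/
def DisplayStruct.HasUnits (D : DisplayStruct B) : Prop :=
  ∀ {X Y : B} (f : X ⟶ Y), IsIso f → D.F f

/-- `(B, F)` has `F`-dependent coproducts: `F` is closed under composition. -/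
def DisplayStruct.HasDepCoproducts (D : DisplayStruct B) : Prop :=
  ∀ {X Y Z : B} (f : X ⟶ Y) (g : Y ⟶ Z), D.F f → D.F g → D.F (f ≫ g)

/-- The data `(h : E ⟶ J, pullback square (zI, zE) over (g, h), e : Z ⟶ K over I)` is an
`F`-dependent product of `f : K ⟶ I` along `g : I ⟶ J`. -/
def IsDepProdCone (D : DisplayStruct B) {K I J E Z : B} (f : K ⟶ I) (g : I ⟶ J)
    (h : E ⟶ J) (zI : Z ⟶ I) (zE : Z ⟶ E) (e : Z ⟶ K) : Prop :=
  IsPullback zI zE g h ∧ e ≫ f = zI ∧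
  ∀ {E' Z' : B} (h' : E' ⟶ J), D.F h' → ∀ (zI' : Z' ⟶ I) (zE' : Z' ⟶ E') (e' : Z' ⟶ K),
    IsPullback zI' zE' g h' → e' ≫ f = zI' →
    ∃! kw : (E' ⟶ E) × (Z' ⟶ Z),
      kw.1 ≫ h = h' ∧ kw.2 ≫ zI = zI' ∧ kw.2 ≫ zE = zE' ≫ kw.1 ∧ kw.2 ≫ e = e'

/-- `(B, F)` has `F`-dependent products. -/
def DisplayStruct.HasDepProds (D : DisplayStruct B) : Prop :=
  ∀ {K I J : B} (f : K ⟶ I) (g : I ⟶ J), D.F f → D.F g →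
    ∃ (E : B) (h : E ⟶ J) (_ : D.F h) (Z : B) (zI : Z ⟶ I) (zE : Z ⟶ E) (e : Z ⟶ K),
      IsDepProdCone D f g h zI zE e

/-- A cloven Grothendieck fibration over `B`, presented as an indexed category:
fibre categories together with reindexing functors and comparison isomorphisms. -/
structure IndexedCat (B : Type u) [Category.{v} B] where
  Fib : B → Cat.{w₂, w₁}
  reindex : ∀ {I J : B}, (I ⟶ J) → (Fib J ⥤ Fib I)
  reindexId : ∀ I : B, reindex (𝟙 I) ≅ 𝟭 (Fib I)
  reindexComp : ∀ {I J K : B} (f : I ⟶ J) (g : J ⟶ K),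
    reindex (f ≫ g) ≅ reindex g ⋙ reindex f

/-- The canonical Beck–Chevalley comparison map `∐_t l* ξ ⟶ r* ∐_b ξ` associated to a
commutative square `t ≫ r = l ≫ b` and left adjoints to reindexing along `t` and `b`. -/
def coprodBCmap (p : IndexedCat.{w₂, w₁} B) {K I L J : B}
    {t : K ⟶ I} {l : K ⟶ L} {r : I ⟶ J} {b : L ⟶ J}
    (sq : t ≫ r = l ≫ b) {St : p.Fib K ⥤ p.Fib I} {Sb : p.Fib L ⥤ p.Fib J}
    (adjt : St ⊣ p.reindex t) (adjb : Sb ⊣ p.reindex b) (ξ : p.Fib L) :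
    St.obj ((p.reindex l).obj ξ) ⟶ (p.reindex r).obj (Sb.obj ξ) :=
  (adjt.homEquiv _ _).symm
    ((p.reindex l).map (adjb.unit.app ξ) ≫ (p.reindexComp l b).inv.app (Sb.obj ξ) ≫
      eqToHom (by rw [sq]) ≫ (p.reindexComp t r).hom.app (Sb.obj ξ))

/-- The canonical Beck–Chevalley comparison map `r* ∏_b ξ ⟶ ∏_t l* ξ` associated to a
commutative square `t ≫ r = l ≫ b` and right adjoints to reindexing along `t` and `b`. -/
def prodBCmap (p : IndexedCat.{w₂, w₁} B) {K I L J : B}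
    {t : K ⟶ I} {l : K ⟶ L} {r : I ⟶ J} {b : L ⟶ J}
    (sq : t ≫ r = l ≫ b) {Pt : p.Fib K ⥤ p.Fib I} {Pb : p.Fib L ⥤ p.Fib J}
    (adjt : p.reindex t ⊣ Pt) (adjb : p.reindex b ⊣ Pb) (ξ : p.Fib L) :
    (p.reindex r).obj (Pb.obj ξ) ⟶ Pt.obj ((p.reindex l).obj ξ) :=
  (adjt.homEquiv _ _)
    ((p.reindexComp t r).inv.app (Pb.obj ξ) ≫ eqToHom (by rw [sq]) ≫
      (p.reindexComp l b).hom.app (Pb.obj ξ) ≫ (p.reindex l).map (adjb.counit.app ξ))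

/-- Fibred coproducts along the display maps `F`: left adjoints to reindexing along every
map of `F`, satisfying the Beck–Chevalley condition for every pullback square of the
appropriate shape. -/
structure FCoproducts (D : DisplayStruct B) (p : IndexedCat.{w₂, w₁} B) where
  Sig : ∀ {I J : B} (u : I ⟶ J), D.F u → (p.Fib I ⥤ p.Fib J)
  adj : ∀ {I J : B} (u : I ⟶ J) (hu : D.F u), Sig u hu ⊣ p.reindex u
  bcc : ∀ {K I L J : B} (t : K ⟶ I) (l : K ⟶ L) (r : I ⟶ J) (b : L ⟶ J)
    (ht : D.F t) (hb : D.F b) (sq : IsPullback t l r b) (ξ : p.Fib L),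
    IsIso (coprodBCmap p sq.w (adj t ht) (adj b hb) ξ)

/-- Fibred products along the display maps `F`. -/
structure FProducts (D : DisplayStruct B) (p : IndexedCat.{w₂, w₁} B) where
  Pi : ∀ {I J : B} (u : I ⟶ J), D.F u → (p.Fib I ⥤ p.Fib J)
  adj : ∀ {I J : B} (u : I ⟶ J) (hu : D.F u), p.reindex u ⊣ Pi u hu
  bcc : ∀ {K I L J : B} (t : K ⟶ I) (l : K ⟶ L) (r : I ⟶ J) (b : L ⟶ J)
    (ht : D.F t) (hb : D.F b) (sq : IsPullback t l r b) (ξ : p.Fib L),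
    IsIso (prodBCmap p sq.w (adj t ht) (adj b hb) ξ)

/-- Given a section `g` of `u : A' ⟶ A` and `β` in the fibre over `A'`, the canonical map
`g* β ⟶ ∐_u β` obtained by reindexing the unit of `∐_u ⊣ u*` along `g` (composed with the
canonical isomorphism `g* u* ≅ id`). -/
def unitSec (p : IndexedCat.{w₂, w₁} B) {D : DisplayStruct B} (C : FCoproducts D p)
    {A A' : B} (u : A' ⟶ A) (hu : D.F u) (g : A ⟶ A') (hg : g ≫ u = 𝟙 A) (β : p.Fib A') :
    (p.reindex g).obj β ⟶ (C.Sig u hu).obj β :=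
  (p.reindex g).map ((C.adj u hu).unit.app β) ≫
    (p.reindexComp g u).inv.app ((C.Sig u hu).obj β) ≫
    eqToHom (by rw [hg]) ≫ (p.reindexId A).hom.app ((C.Sig u hu).obj β)

/-- Given a section `g` of `u : A' ⟶ A` and `β` in the fibre over `A'`, the canonical map
`∏_u β ⟶ g* β` obtained by reindexing the counit of `u* ⊣ ∏_u` along `g`. -/
def counitSec (p : IndexedCat.{w₂, w₁} B) {D : DisplayStruct B} (P : FProducts D p)
    {A A' : B} (u : A' ⟶ A) (hu : D.F u) (g : A ⟶ A') (hg : g ≫ u = 𝟙 A) (β : p.Fib A') :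
    (P.Pi u hu).obj β ⟶ (p.reindex g).obj β :=
  (p.reindexId A).inv.app ((P.Pi u hu).obj β) ≫ eqToHom (by rw [hg]) ≫
    (p.reindexComp g u).hom.app ((P.Pi u hu).obj β) ≫
    (p.reindex g).map ((P.adj u hu).counit.app β)

/-- `α` in the fibre over `A` is `(F, ∐)`-quantifier splitting: every vertical map
`α ⟶ ∐_u β` for `u : A' ⟶ A` in `F` factors through the reindexed unit along a unique
section of `u`, via a unique vertical map. -/
def IsCoprodSplitting {D : DisplayStruct B} (p : IndexedCat.{w₂, w₁} B)
    (C : FCoproducts D p) {A : B} (α : p.Fib A) : Prop :=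
  ∀ {A' : B} (u : A' ⟶ A) (hu : D.F u) (β : p.Fib A') (h : α ⟶ (C.Sig u hu).obj β),
    ∃! gh : Σ' (g : A ⟶ A') (hg : g ≫ u = 𝟙 A), (α ⟶ (p.reindex g).obj β),
      h = gh.2.2 ≫ unitSec p C u hu gh.1 gh.2.1 β

/-- `α` is `(F, ∐)`-quantifier-free: all of its reindexings are quantifier splitting. -/
def IsCoprodFree {D : DisplayStruct B} (p : IndexedCat.{w₂, w₁} B)
    (C : FCoproducts D p) {A : B} (α : p.Fib A) : Prop :=
  ∀ {I : B} (f : I ⟶ A), IsCoprodSplitting p C ((p.reindex f).obj α)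

/-- `p` has enough `(F, ∐)`-quantifier-free objects. -/
def HasEnoughCoprodFree {D : DisplayStruct B} (p : IndexedCat.{w₂, w₁} B)
    (C : FCoproducts D p) : Prop :=
  ∀ {I : B} (α : p.Fib I), ∃ (A : B) (f : A ⟶ I) (hf : D.F f) (β : p.Fib A),
    IsCoprodFree p C β ∧ Nonempty (α ≅ (C.Sig f hf).obj β)

/-- `α` in the fibre over `A` is `(F, ∏)`-quantifier splitting: every vertical map
`∏_u β ⟶ α` for `u : A' ⟶ A` in `F` factors through the reindexed counit along a unique
section of `u`, via a unique vertical map. -/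
def IsProdSplitting {D : DisplayStruct B} (p : IndexedCat.{w₂, w₁} B)
    (P : FProducts D p) {A : B} (α : p.Fib A) : Prop :=
  ∀ {A' : B} (u : A' ⟶ A) (hu : D.F u) (β : p.Fib A') (h : (P.Pi u hu).obj β ⟶ α),
    ∃! gh : Σ' (g : A ⟶ A') (hg : g ≫ u = 𝟙 A), ((p.reindex g).obj β ⟶ α),
      h = counitSec p P u hu gh.1 gh.2.1 β ≫ gh.2.2

/-- `α` is `(F, ∏)`-quantifier-free. -/
def IsProdFree {D : DisplayStruct B} (p : IndexedCat.{w₂, w₁} B)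
    (P : FProducts D p) {A : B} (α : p.Fib A) : Prop :=
  ∀ {I : B} (f : I ⟶ A), IsProdSplitting p P ((p.reindex f).obj α)

/-- `p` has enough `(F, ∏)`-quantifier-free objects. -/
def HasEnoughProdFree {D : DisplayStruct B} (p : IndexedCat.{w₂, w₁} B)
    (P : FProducts D p) : Prop :=
  ∀ {I : B} (α : p.Fib I), ∃ (A : B) (f : A ⟶ I) (hf : D.F f) (β : p.Fib A),
    IsProdFree p P β ∧ Nonempty (α ≅ (P.Pi f hf).obj β)

/-- Relative `(F, ∏)`-quantifier splitting, where the objects `β` are restricted to a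
full subfibration cut out by the predicate `S` (e.g. the `(F, ∐)`-quantifier-free part). -/
def IsProdSplittingRel {D : DisplayStruct B} (p : IndexedCat.{w₂, w₁} B)
    (P : FProducts D p) (S : ∀ ⦃I : B⦄, p.Fib I → Prop) {A : B} (α : p.Fib A) : Prop :=
  ∀ {A' : B} (u : A' ⟶ A) (hu : D.F u) (β : p.Fib A'), S β →
    ∀ (h : (P.Pi u hu).obj β ⟶ α),
    ∃! gh : Σ' (g : A ⟶ A') (hg : g ≫ u = 𝟙 A), ((p.reindex g).obj β ⟶ α),
      h = counitSec p P u hu gh.1 gh.2.1 β ≫ gh.2.2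

/-- Relative `(F, ∏)`-quantifier-freeness in the full subfibration cut out by `S`. -/
def IsProdFreeRel {D : DisplayStruct B} (p : IndexedCat.{w₂, w₁} B)
    (P : FProducts D p) (S : ∀ ⦃I : B⦄, p.Fib I → Prop) {A : B} (α : p.Fib A) : Prop :=
  ∀ {I : B} (f : I ⟶ A), IsProdSplittingRel p P S ((p.reindex f).obj α)
/-- A family of Hilbert τ-data: for every `α` over `I` and display map `f : I ⟶ J`,
a section `τ` of `f` together with a vertical map `τ* α ⟶ ∏_f α`. -/
def TauFamily (D : DisplayStruct B) (p : IndexedCat.{w₂, w₁} B) (P : FProducts D p) :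
    Type _ :=
  ∀ (I J : B) (f : I ⟶ J) (hf : D.F f) (α : p.Fib I),
    Σ' (s : J ⟶ I) (_ : s ≫ f = 𝟙 J), ((p.reindex s).obj α ⟶ (P.Pi f hf).obj α)

/-- The conditions (2) and (3) of the characterisation of Hilbert τ-fibrations
(condition (1), `τ ≫ f = 𝟙`, is built into `TauFamily`). -/
def IsGoodTau {D : DisplayStruct B} {p : IndexedCat.{w₂, w₁} B} {P : FProducts D p}
    (E : TauFamily D p P) : Prop :=
  (∀ (I J : B) (f : I ⟶ J) (hf : D.F f) (α : p.Fib I),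
    counitSec p P f hf (E I J f hf α).1 (E I J f hf α).2.1 α ≫ (E I J f hf α).2.2 = 𝟙 _) ∧
  (∀ (I' A : B) (g : A ⟶ I') (hg : D.F g) (β : p.Fib A) (α' : p.Fib I')
    (u : (P.Pi g hg).obj β ⟶ α') (t : I' ⟶ A) (ht : t ≫ g = 𝟙 I')
    (h : (p.reindex t).obj β ⟶ α'),
    u = counitSec p P g hg t ht β ≫ h →
      ∃ hte : t = (E A I' g hg β).1,
        h = eqToHom (by rw [hte]) ≫ (E A I' g hg β).2.2 ≫ u)

/-- `(F, ∏)`-quantifier splitting is invariant under vertical isomorphism. -/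
lemma splitting_of_iso {D : DisplayStruct B} (p : IndexedCat.{w₂, w₁} B)
    (P : FProducts D p) {A : B} {α α' : p.Fib A} (e : α ≅ α')
    (hα : IsProdSplitting p P α) : IsProdSplitting p P α' := by
  intro A' u hu β h
  obtain ⟨⟨g, hg, k⟩, hk, huniq⟩ := hα u hu β (h ≫ e.inv)
  have hk₀ : h ≫ e.inv = counitSec p P u hu g hg β ≫ k := hk
  refine ⟨⟨g, hg, k ≫ e.hom⟩, ?_, ?_⟩
  · show h = counitSec p P u hu g hg β ≫ (k ≫ e.hom)
    rw [← Category.assoc, ← hk₀]; simp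
  · rintro ⟨g', hg', k'⟩ hk'
    have hk₀' : h = counitSec p P u hu g' hg' β ≫ k' := hk'
    have key := huniq ⟨g', hg', k' ≫ e.inv⟩
      (show h ≫ e.inv = counitSec p P u hu g' hg' β ≫ (k' ≫ e.inv) by
        rw [← Category.assoc, ← hk₀'])
    rw [PSigma.mk.injEq] at key
    obtain ⟨rfl, h2⟩ := key
    have h2' := eq_of_heq h2
    rw [PSigma.mk.injEq] at h2'
    obtain ⟨-, h3⟩ := h2'
    have hkk := eq_of_heq h3
    have : k' = k ≫ e.hom := by rw [← hkk]; simp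
    rw [this]

/-- STATEMENT 7: A fibration with fibred products along `F` (over a display map category
with `F`-dependent coproducts) is a dependent Hilbert τ-fibration, i.e. every object is
`(F, ∏)`-quantifier-free, if and only if there is a unique family of Hilbert τ-operators
satisfying conditions (1), (2) and (3). -/
theorem hilbert_tau_characterisation (D : DisplayStruct B) (hco : D.HasDepCoproducts)
    (p : IndexedCat.{w₂, w₁} B) (P : FProducts D p) :
    (∀ (I : B) (α : p.Fib I), IsProdFree p P α) ↔ ∃! E : TauFamily D p P, IsGoodTau E := by
  constructor
  · intro H
    have split : ∀ (A : B) (γ : p.Fib A), IsProdSplitting p P γ :=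
      fun A γ => splitting_of_iso p P ((p.reindexId A).app γ) (H A γ (𝟙 A))
    have ex : ∀ (I J : B) (f : I ⟶ J) (hf : D.F f) (α : p.Fib I),
        ∃! gh : Σ' (g : J ⟶ I) (hg : g ≫ f = 𝟙 J),
            ((p.reindex g).obj α ⟶ (P.Pi f hf).obj α),
          𝟙 ((P.Pi f hf).obj α) = counitSec p P f hf gh.1 gh.2.1 α ≫ gh.2.2 :=
      fun I J f hf α => split J ((P.Pi f hf).obj α) f hf α (𝟙 _)
    refine ⟨fun I J f hf α => (ex I J f hf α).choose, ⟨?_, ?_⟩, ?_⟩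
    · intro I J f hf α
      exact ((ex I J f hf α).choose_spec.1).symm
    · intro I' A g hg β α' u t ht h hu_eq
      set c := (ex A I' g hg β).choose with hc
      have hcspec : 𝟙 _ = counitSec p P g hg c.1 c.2.1 β ≫ c.2.2 :=
        (ex A I' g hg β).choose_spec.1
      have h2 : u = counitSec p P g hg c.1 c.2.1 β ≫ (c.2.2 ≫ u) := by
        rw [← Category.assoc, ← hcspec, Category.id_comp]
      have key := (split I' α' g hg β u).unique (y₁ := ⟨t, ht, h⟩)
        (y₂ := ⟨c.1, c.2.1, c.2.2 ≫ u⟩) hu_eq h2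
      rw [PSigma.mk.injEq] at key
      obtain ⟨ht1, ht2⟩ := key
      refine ⟨ht1, ?_⟩
      subst ht1
      have h3 := eq_of_heq ht2
      rw [PSigma.mk.injEq] at h3
      obtain ⟨-, h4⟩ := h3
      have h5 := eq_of_heq h4
      rw [h5]
      simp
      rfl
    · intro E' hE'
      funext I J f hf α
      exact (ex I J f hf α).choose_spec.2 (E' I J f hf α) (hE'.1 I J f hf α).symm
  · rintro ⟨E, ⟨hE1, hE2⟩, -⟩
    have splitAll : ∀ (A : B) (γ : p.Fib A), IsProdSplitting p P γ := by
      intro A γ A' u hu β h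
      refine ⟨⟨(E A' A u hu β).1, (E A' A u hu β).2.1, (E A' A u hu β).2.2 ≫ h⟩, ?_, ?_⟩
      · show h = counitSec p P u hu (E A' A u hu β).1 (E A' A u hu β).2.1 β ≫
          ((E A' A u hu β).2.2 ≫ h)
        rw [← Category.assoc, hE1, Category.id_comp]
      · rintro ⟨t, ht, k⟩ hk
        obtain ⟨hte, hk2⟩ := hE2 A A' u hu β γ h t ht k hk
        subst hte
        rw [hk2]
        simp
    exact fun I α {J} f => splitAll J ((p.reindex f).obj α)
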